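/- Let ω := (−1 + i√3)/2 ∈ ℂ and let ℤ[ω] := {a + bω : a,b ∈ ℤ} be the ring of Eisenstein integers. For α,β ∈ ℂ write n(α,β) for the 3×3 complex matrix with rows (1, α, β), (0, 1, conj(α)), (0, 0, 1), where conj denotes complex conjugation. Set T₁ := n(1, −ω) and T₂ := n(ω, −ω). Then the subgroup of GL(3,ℂ) generated by {T₁, T₂} is exactly the set N(𝒪_K) := { n(α,β) : α, β ∈ ℤ[ω], β + conj(β) = α·conj(α) }. -/

import Mathlib

open Complex

noncomputable section

/-- The primitive cube root of unity `ω = (−1 + i√3)/2`. -/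
def ω : ℂ := (-1 + Complex.I * Real.sqrt 3) / 2

/-- A complex number is an Eisenstein integer if it lies in `ℤ + ℤω`. -/
def IsEisenstein (z : ℂ) : Prop := ∃ a b : ℤ, z = (a : ℂ) + (b : ℂ) * ω

/-- The unipotent matrix `n(α,β)` with rows `(1,α,β)`, `(0,1,conj α)`, `(0,0,1)`. -/
def nmat (α β : ℂ) : Matrix (Fin 3) (Fin 3) ℂ :=
  !![1, α, β; 0, 1, (starRingEnd ℂ) α; 0, 0, 1]


lemma conj_ω : (starRingEnd ℂ) ω = -1 - ω := by
  simp only [ω, map_div₀, map_add, map_mul, map_neg, map_one, Complex.conj_I,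
    Complex.conj_ofReal, Complex.conj_ofNat]
  field_simp
  ring

lemma ω_sq : ω * ω = -1 - ω := by
  have h3 : ((Real.sqrt 3 : ℝ) : ℂ) * ((Real.sqrt 3 : ℝ) : ℂ) = 3 := by
    rw [← Complex.ofReal_mul, Real.mul_self_sqrt] <;> norm_num
  simp only [ω]; field_simp
  linear_combination Complex.I ^ 2 * h3 + 3 * Complex.I_sq

-- Eisenstein closure lemmas
lemma Eis_zero : IsEisenstein 0 := ⟨0, 0, by push_cast; ring⟩
lemma Eis_one : IsEisenstein 1 := ⟨1, 0, by push_cast; ring⟩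
lemma Eis_ω : IsEisenstein ω := ⟨0, 1, by push_cast; ring⟩
lemma Eis_add {x y : ℂ} (hx : IsEisenstein x) (hy : IsEisenstein y) : IsEisenstein (x + y) := by
  obtain ⟨a, b, rfl⟩ := hx; obtain ⟨c, d, rfl⟩ := hy
  exact ⟨a + c, b + d, by push_cast; ring⟩
lemma Eis_neg {x : ℂ} (hx : IsEisenstein x) : IsEisenstein (-x) := by
  obtain ⟨a, b, rfl⟩ := hx; exact ⟨-a, -b, by push_cast; ring⟩
lemma Eis_mul {x y : ℂ} (hx : IsEisenstein x) (hy : IsEisenstein y) : IsEisenstein (x * y) := by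
  obtain ⟨a, b, rfl⟩ := hx; obtain ⟨c, d, rfl⟩ := hy
  refine ⟨a * c - b * d, a * d + b * c - b * d, ?_⟩
  push_cast
  linear_combination (b : ℂ) * d * ω_sq
lemma Eis_conj {x : ℂ} (hx : IsEisenstein x) : IsEisenstein ((starRingEnd ℂ) x) := by
  obtain ⟨a, b, rfl⟩ := hx
  refine ⟨a - b, -b, ?_⟩
  simp only [map_add, map_mul, map_intCast, conj_ω]
  push_cast; ring

lemma nmat_mul (α β α' β' : ℂ) :
    nmat α β * nmat α' β' = nmat (α + α') (β + β' + α * (starRingEnd ℂ) α') := by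
  simp only [nmat, Matrix.mul_fin_three, map_add]
  ext i j
  fin_cases i <;> fin_cases j <;> simp <;> ring

lemma nmat_one : nmat 0 0 = 1 := by
  simp only [nmat, map_zero]
  rw [Matrix.one_fin_three]

abbrev GL3 := Matrix.GeneralLinearGroup (Fin 3) ℂ

def U (α β : ℂ) : GL3 :=
  ⟨nmat α β, nmat (-α) (α * (starRingEnd ℂ) α - β),
   by rw [nmat_mul]; simp only [map_neg]; rw [show α + -α = 0 by ring,
        show β + (α * (starRingEnd ℂ) α - β) + α * -(starRingEnd ℂ) α = 0 by ring, nmat_one],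
   by rw [nmat_mul, show -α + α = 0 by ring,
        show α * (starRingEnd ℂ) α - β + β + -α * (starRingEnd ℂ) α = 0 by ring, nmat_one]⟩

@[simp] lemma U_val (α β : ℂ) : (U α β : Matrix (Fin 3) (Fin 3) ℂ) = nmat α β := rfl

lemma U_mul (α β α' β' : ℂ) :
    U α β * U α' β' = U (α + α') (β + β' + α * (starRingEnd ℂ) α') := by
  apply Units.ext
  simp [U_val, nmat_mul]

lemma U_inv (α β : ℂ) : (U α β)⁻¹ = U (-α) (α * (starRingEnd ℂ) α - β) :=
  Units.ext rfl

lemma eq_U {x : GL3} {α β : ℂ} (h : (x : Matrix (Fin 3) (Fin 3) ℂ) = nmat α β) : x = U α β :=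
  Units.ext h

lemma trace_neg_ω_one : -ω + (starRingEnd ℂ) (-ω) = 1 * (starRingEnd ℂ) 1 := by
  rw [map_neg, conj_ω, map_one]; ring

lemma trace_neg_ω_ω : -ω + (starRingEnd ℂ) (-ω) = ω * (starRingEnd ℂ) ω := by
  rw [map_neg, conj_ω]
  linear_combination ω_sq

def NOK : Subgroup GL3 where
  carrier := {x : GL3 | ∃ α β : ℂ,
      IsEisenstein α ∧ IsEisenstein β ∧
      β + (starRingEnd ℂ) β = α * (starRingEnd ℂ) α ∧
      (x : Matrix (Fin 3) (Fin 3) ℂ) = nmat α β}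
  one_mem' := ⟨0, 0, Eis_zero, Eis_zero, by simp, by rw [nmat_one]; rfl⟩
  mul_mem' := by
    rintro x y ⟨α, β, hα, hβ, ht, hx⟩ ⟨α', β', hα', hβ', ht', hy⟩
    refine ⟨α + α', β + β' + α * (starRingEnd ℂ) α', Eis_add hα hα',
      Eis_add (Eis_add hβ hβ') (Eis_mul hα (Eis_conj hα')), ?_, ?_⟩
    · simp only [map_add, map_mul, Complex.conj_conj]
      linear_combination ht + ht'
    · rw [Units.val_mul, hx, hy, nmat_mul]
  inv_mem' := by
    rintro x ⟨α, β, hα, hβ, ht, hx⟩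
    refine ⟨-α, (starRingEnd ℂ) β, Eis_neg hα, Eis_conj hβ, ?_, ?_⟩
    · simp only [map_neg, Complex.conj_conj]
      linear_combination ht
    · rw [eq_U hx, U_inv, U_val,
        show α * (starRingEnd ℂ) α - β = (starRingEnd ℂ) β by linear_combination -ht]

def Sgen : Set GL3 := {x : GL3 |
    (x : Matrix (Fin 3) (Fin 3) ℂ) = nmat 1 (-ω) ∨
    (x : Matrix (Fin 3) (Fin 3) ℂ) = nmat ω (-ω)}

def H : Subgroup GL3 := Subgroup.closure Sgen

/-- Predicate: `α` is realized as first coordinate of an element of `H`. -/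
def Good (α : ℂ) : Prop :=
  IsEisenstein α ∧ ∃ β : ℂ, IsEisenstein β ∧
    β + (starRingEnd ℂ) β = α * (starRingEnd ℂ) α ∧ U α β ∈ H

lemma good_zero : Good 0 := by
  refine ⟨Eis_zero, 0, Eis_zero, by simp, ?_⟩
  have : U 0 0 = 1 := Units.ext (by rw [U_val, nmat_one]; rfl)
  rw [this]; exact one_mem H

lemma good_one : Good 1 :=
  ⟨Eis_one, -ω, Eis_neg Eis_ω, trace_neg_ω_one,
    Subgroup.subset_closure (Or.inl rfl)⟩

lemma good_ω : Good ω :=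
  ⟨Eis_ω, -ω, Eis_neg Eis_ω, trace_neg_ω_ω,
    Subgroup.subset_closure (Or.inr rfl)⟩

lemma good_add {α α' : ℂ} (h : Good α) (h' : Good α') : Good (α + α') := by
  obtain ⟨hα, β, hβ, ht, hH⟩ := h
  obtain ⟨hα', β', hβ', ht', hH'⟩ := h'
  refine ⟨Eis_add hα hα', β + β' + α * (starRingEnd ℂ) α',
    Eis_add (Eis_add hβ hβ') (Eis_mul hα (Eis_conj hα')), ?_, ?_⟩
  · simp only [map_add, map_mul, Complex.conj_conj]
    linear_combination ht + ht'
  · rw [← U_mul]; exact mul_mem hH hH'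

lemma good_neg {α : ℂ} (h : Good α) : Good (-α) := by
  obtain ⟨hα, β, hβ, ht, hH⟩ := h
  refine ⟨Eis_neg hα, (starRingEnd ℂ) β, Eis_conj hβ, ?_, ?_⟩
  · simp only [map_neg, Complex.conj_conj]
    linear_combination ht
  · rw [show (starRingEnd ℂ) β = α * (starRingEnd ℂ) α - β by linear_combination ht, ← U_inv]
    exact inv_mem hH

lemma good_int (z : ℂ) (h : Good z) : ∀ m : ℤ, Good ((m : ℂ) * z) := by
  intro m
  induction m using Int.induction_on with
  | zero => rw [show ((0:ℤ):ℂ) * z = 0 by push_cast; ring]; exact good_zero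
  | succ k ih =>
      rw [show (((k:ℤ)+1 : ℤ) : ℂ) * z = (k:ℂ) * z + z by push_cast; ring]
      exact good_add ih h
  | pred k ih =>
      rw [show ((-(k:ℤ)-1 : ℤ) : ℂ) * z = ((-(k:ℤ):ℤ) : ℂ) * z + -z by push_cast; ring]
      exact good_add ih (good_neg h)

lemma U_congr {a a' b b' : ℂ} (h1 : a = a') (h2 : b = b') : U a b = U a' b' := by
  subst h1; subst h2; rfl

lemma comm_eq : U 1 (-ω) * U ω (-ω) * (U 1 (-ω))⁻¹ * (U ω (-ω))⁻¹ = U 0 (-(1+2*ω)) := by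
  rw [U_inv, U_inv, U_mul, U_mul, U_mul]
  refine U_congr (by ring) ?_
  simp only [map_neg, map_one, conj_ω]
  ring

lemma comm_mem : U 0 (-(1+2*ω)) ∈ H := by
  rw [← comm_eq]
  have h1 : U 1 (-ω) ∈ H := Subgroup.subset_closure (Or.inl rfl)
  have h2 : U ω (-ω) ∈ H := Subgroup.subset_closure (Or.inr rfl)
  exact mul_mem (mul_mem (mul_mem h1 h2) (inv_mem h1)) (inv_mem h2)

lemma comm_inv_mem : U 0 (1+2*ω) ∈ H := by
  have := inv_mem comm_mem
  rw [U_inv] at this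
  rwa [U_congr (show (0:ℂ) = -0 by ring)
    (show (1+2*ω : ℂ) = 0 * (starRingEnd ℂ) 0 - -(1+2*ω) by simp)]

lemma cent_mem : ∀ m : ℤ, U 0 ((m : ℂ) * (1+2*ω)) ∈ H := by
  intro m
  induction m using Int.induction_on with
  | zero =>
      rw [U_congr rfl (show ((0:ℤ):ℂ) * (1+2*ω) = 0 by push_cast; ring)]
      have : U (0:ℂ) 0 = 1 := Units.ext (by rw [U_val, nmat_one]; rfl)
      rw [this]; exact one_mem H
  | succ k ih =>
      have := mul_mem ih comm_inv_mem
      rw [U_mul] at this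
      rwa [U_congr (show (0:ℂ) = 0 + 0 by ring)
        (show (((k:ℤ)+1 : ℤ) : ℂ) * (1+2*ω)
            = (k:ℂ) * (1+2*ω) + (1+2*ω) + 0 * (starRingEnd ℂ) 0 by push_cast; ring)]
  | pred k ih =>
      have := mul_mem ih comm_mem
      rw [U_mul] at this
      rwa [U_congr (show (0:ℂ) = 0 + 0 by ring)
        (show ((-(k:ℤ)-1 : ℤ) : ℂ) * (1+2*ω)
            = ((-(k:ℤ):ℤ) : ℂ) * (1+2*ω) + -(1+2*ω) + 0 * (starRingEnd ℂ) 0 by push_cast; ring)]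

lemma reverse_incl {x : GL3} {α β : ℂ} (hα : IsEisenstein α) (hβ : IsEisenstein β)
    (ht : β + (starRingEnd ℂ) β = α * (starRingEnd ℂ) α)
    (hx : (x : Matrix (Fin 3) (Fin 3) ℂ) = nmat α β) : x ∈ H := by
  obtain ⟨a, b, rfl⟩ := hα
  -- Good α
  have hGα : Good ((a : ℂ) + (b : ℂ) * ω) := by
    have h1 : Good ((a : ℂ) * 1) := good_int 1 good_one a
    have h2 : Good ((b : ℂ) * ω) := good_int ω good_ω b
    have := good_add h1 h2
    rwa [show (a : ℂ) * 1 + (b : ℂ) * ω = (a : ℂ) + (b : ℂ) * ω by ring] at this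
  obtain ⟨-, β₀, hβ₀, ht₀, hU0⟩ := hGα
  obtain ⟨p, q, hβeq⟩ := hβ
  obtain ⟨p0, q0, hβ0eq⟩ := hβ₀
  -- the difference β - β₀ is central
  have e1 : (starRingEnd ℂ) β = (p : ℂ) + (q : ℂ) * (-1 - ω) := by
    rw [hβeq]; simp [map_add, map_mul, conj_ω]
  have e2 : (starRingEnd ℂ) β₀ = (p0 : ℂ) + (q0 : ℂ) * (-1 - ω) := by
    rw [hβ0eq]; simp [map_add, map_mul, conj_ω]
  have hδ : β - β₀ + ((starRingEnd ℂ) β - (starRingEnd ℂ) β₀) = 0 := by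
    linear_combination ht - ht₀
  rw [e1, e2, hβeq, hβ0eq] at hδ
  have hint : (2 * p - q - (2 * p0 - q0) : ℤ) = 0 := by
    have : ((2 * p - q - (2 * p0 - q0) : ℤ) : ℂ) = 0 := by push_cast; linear_combination hδ
    exact_mod_cast this
  have hBA : ((q : ℂ) - q0) = 2 * ((p : ℂ) - p0) := by
    have : (q - q0 : ℤ) = 2 * (p - p0) := by omega
    exact_mod_cast congrArg (Int.cast : ℤ → ℂ) this
  have hβsplit : β = β₀ + ((p - p0 : ℤ) : ℂ) * (1 + 2 * ω) := by
    rw [hβeq, hβ0eq]; push_cast; linear_combination ω * hBA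
  have hmem := mul_mem hU0 (cent_mem (p - p0))
  rw [U_mul] at hmem
  have hxU : x = U (((a : ℂ) + (b : ℂ) * ω) + 0)
      (β₀ + ((p - p0 : ℤ) : ℂ) * (1 + 2 * ω) + ((a : ℂ) + (b : ℂ) * ω) * (starRingEnd ℂ) 0) := by
    rw [eq_U hx]
    exact U_congr (by ring) (by rw [map_zero, mul_zero, add_zero, hβsplit])
  rw [hxU]
  exact hmem


/-- **Theorem 3.1.** The subgroup of `GL(3,ℂ)` generated by
`T₁ = n(1,−ω)` and `T₂ = n(ω,−ω)` is exactly
`N(𝒪_K) = { n(α,β) : α,β ∈ ℤ[ω], β + conj β = α·conj α }`. -/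
theorem statement14 :
    ((Subgroup.closure {x : Matrix.GeneralLinearGroup (Fin 3) ℂ |
        (x : Matrix (Fin 3) (Fin 3) ℂ) = nmat 1 (-ω) ∨
        (x : Matrix (Fin 3) (Fin 3) ℂ) = nmat ω (-ω)} :
      Subgroup (Matrix.GeneralLinearGroup (Fin 3) ℂ)) : Set (Matrix.GeneralLinearGroup (Fin 3) ℂ)) =
    {x : Matrix.GeneralLinearGroup (Fin 3) ℂ | ∃ α β : ℂ,
      IsEisenstein α ∧ IsEisenstein β ∧
      β + (starRingEnd ℂ) β = α * (starRingEnd ℂ) α ∧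
      (x : Matrix (Fin 3) (Fin 3) ℂ) = nmat α β} := by
  apply Set.Subset.antisymm
  · have hle : Subgroup.closure Sgen ≤ NOK := by
      rw [Subgroup.closure_le]
      rintro y (h | h)
      · exact ⟨1, -ω, Eis_one, Eis_neg Eis_ω, trace_neg_ω_one, h⟩
      · exact ⟨ω, -ω, Eis_ω, Eis_neg Eis_ω, trace_neg_ω_ω, h⟩
    exact fun x hx => hle hx
  · rintro x ⟨α, β, hα, hβ, ht, hx⟩
    exact reverse_incl hα hβ ht hx
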